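/- Let G be a finitely generated group with subgroups H and K, and let X and Y be nontrivial almost invariant subsets of G over H and K respectively. If X and Y are equivalent (i.e., X ∩ Y* and X* ∩ Y are both H-finite), then H and K are commensurable subgroups of G. -/

import Mathlib

open scoped Pointwise

/-- A subset `A` of `G` is `L`-finite if it is contained in finitely many
right cosets `Lg` of the subgroup `L`. -/
def HFinite {G : Type*} [Group G] (L : Subgroup G) (A : Set G) : Prop :=
  ∃ F : Finset G, A ⊆ ⋃ g ∈ F, ((L : Set G) * {g} : Set G)

/-- `X` is `L`-almost invariant. -/
def AlmostInv {G : Type*} [Group G] (L : Subgroup G) (X : Set G) : Prop :=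
  (L : Set G) * X = X ∧
    ∀ g : G, HFinite L ((X \ ((X * {g} : Set G))) ∪ (((X * {g} : Set G)) \ X))

lemma mem_mulSingleton {G : Type*} [Group G] {A : Set G} {c z : G} :
    z ∈ (A * {c} : Set G) ↔ z * c⁻¹ ∈ A := by
  constructor
  · rintro ⟨a, ha, y, hy, rfl⟩
    rcases hy with rfl
    simpa using ha
  · intro h
    exact ⟨z * c⁻¹, h, c, rfl, by simp⟩

lemma HFinite.mono {G : Type*} [Group G] {L : Subgroup G} {A B : Set G}
    (hAB : A ⊆ B) (hB : HFinite L B) : HFinite L A := by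
  obtain ⟨F, hF⟩ := hB
  exact ⟨F, hAB.trans hF⟩

lemma HFinite.union {G : Type*} [Group G] {L : Subgroup G} {A B : Set G}
    (hA : HFinite L A) (hB : HFinite L B) : HFinite L (A ∪ B) := by
  classical
  obtain ⟨F₁, hF₁⟩ := hA
  obtain ⟨F₂, hF₂⟩ := hB
  refine ⟨F₁ ∪ F₂, ?_⟩
  rintro z (hz | hz)
  · obtain ⟨f, hf, hzf⟩ := Set.mem_iUnion₂.mp (hF₁ hz)
    exact Set.mem_iUnion₂.mpr ⟨f, Finset.mem_union_left _ hf, hzf⟩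
  · obtain ⟨f, hf, hzf⟩ := Set.mem_iUnion₂.mp (hF₂ hz)
    exact Set.mem_iUnion₂.mpr ⟨f, Finset.mem_union_right _ hf, hzf⟩

lemma HFinite.mulRight {G : Type*} [Group G] {L : Subgroup G} {A : Set G}
    (hA : HFinite L A) (c : G) : HFinite L (A * {c}) := by
  classical
  obtain ⟨F, hF⟩ := hA
  refine ⟨F.image (· * c), ?_⟩
  intro z hz
  have hz' : z * c⁻¹ ∈ A := mem_mulSingleton.mp hz
  obtain ⟨f, hf, hzf⟩ := Set.mem_iUnion₂.mp (hF hz')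
  have hmem : z * c⁻¹ * f⁻¹ ∈ L := mem_mulSingleton.mp hzf
  refine Set.mem_iUnion₂.mpr ⟨f * c, Finset.mem_image_of_mem _ hf, mem_mulSingleton.mpr ?_⟩
  have : z * (f * c)⁻¹ = z * c⁻¹ * f⁻¹ := by group
  rw [this]; exact hmem

lemma relIndex_ne_zero_of_hfinite {G : Type*} [Group G] (L M : Subgroup G)
    (h : HFinite L (M : Set G)) : L.relIndex M ≠ 0 := by
  classical
  obtain ⟨F, hF⟩ := h
  have : Finite (M ⧸ L.subgroupOf M) := by
    have ex : ∀ q : M ⧸ L.subgroupOf M, ∃ f ∈ F, ((q.out : G))⁻¹ * f⁻¹ ∈ L := by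
      intro q
      have hm : ((q.out : G))⁻¹ ∈ (M : Set G) := (q.out⁻¹ : M).2
      obtain ⟨f, hf, hzf⟩ := Set.mem_iUnion₂.mp (hF hm)
      exact ⟨f, hf, mem_mulSingleton.mp hzf⟩
    choose f hfF hfL using ex
    refine Finite.of_injective (fun q => (⟨f q, hfF q⟩ : F)) ?_
    intro q q' hqq'
    have hfe : f q = f q' := congrArg Subtype.val hqq'
    have h1 : ((q.out : G))⁻¹ * (f q)⁻¹ ∈ L := hfL q
    have h2 : ((q'.out : G))⁻¹ * (f q)⁻¹ ∈ L := by rw [hfe]; exact hfL q'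
    have h3 : ((q.out : G))⁻¹ * (q'.out : G) ∈ L := by
      have := L.mul_mem h1 (L.inv_mem h2)
      have he : ((q.out : G))⁻¹ * (f q)⁻¹ * (((q'.out : G))⁻¹ * (f q)⁻¹)⁻¹
          = ((q.out : G))⁻¹ * (q'.out : G) := by group
      rwa [he] at this
    rw [← QuotientGroup.out_eq' q, ← QuotientGroup.out_eq' q']
    refine QuotientGroup.eq.mpr ?_
    rw [Subgroup.mem_subgroupOf]
    simpa using h3
  rw [Subgroup.relIndex]
  exact Subgroup.index_ne_zero_of_finite

theorem commensurable_of_equivalent {G : Type*} [Group G] (hG : Group.FG G)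
    (H K : Subgroup G) (X Y : Set G)
    (hX : AlmostInv H X) (hXnt : ¬ HFinite H X ∧ ¬ HFinite H Xᶜ)
    (hY : AlmostInv K Y) (hYnt : ¬ HFinite K Y ∧ ¬ HFinite K Yᶜ)
    (hEquiv : HFinite H (X ∩ Yᶜ) ∧ HFinite H (Xᶜ ∩ Y)) :
    (H ⊓ K).relIndex H ≠ 0 ∧ (H ⊓ K).relIndex K ≠ 0 := by
  classical
  obtain ⟨hXf, hXc⟩ := hXnt
  obtain ⟨hYf, hYc⟩ := hYnt
  obtain ⟨hE1, hE2⟩ := hEquiv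
  -- basic facts about invariance
  have hHX : ∀ h ∈ H, ∀ x ∈ X, h * x ∈ X := by
    intro h hh x hx
    have := Set.mul_mem_mul hh hx
    rwa [hX.1] at this
  have hHXc : ∀ h ∈ H, ∀ x ∈ Xᶜ, h * x ∈ Xᶜ := by
    intro h hh x hx hmem
    have : h⁻¹ * (h * x) ∈ X := hHX h⁻¹ (H.inv_mem hh) _ hmem
    simp at this
    exact hx this
  have hKY : ∀ k ∈ K, ∀ y ∈ Y, k * y ∈ Y := by
    intro k hk y hy
    have := Set.mul_mem_mul hk hy
    rwa [hY.1] at this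
  have hKYc : ∀ k ∈ K, ∀ y ∈ Yᶜ, k * y ∈ Yᶜ := by
    intro k hk y hy hmem
    have : k⁻¹ * (k * y) ∈ Y := hKY k⁻¹ (K.inv_mem hk) _ hmem
    simp at this
    exact hy this
  -- the H-finite "difference" set
  set Z : Set G := (X ∩ Yᶜ) ∪ (Xᶜ ∩ Y) with hZdef
  have hZfin : HFinite H Z := hE1.union hE2
  obtain ⟨FZ, hFZ⟩ := hZfin
  have hZfin' : HFinite H Z := ⟨FZ, hFZ⟩
  -- Goal 1 : H is contained in finitely many right K-cosets.
  -- Choose x₀ ∈ X and x₁ ∈ Xᶜ avoiding the cosets covering Z.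
  have hx0 : ∃ x₀ ∈ X, x₀ ∉ ⋃ g ∈ FZ, ((H : Set G) * {g} : Set G) := by
    by_contra hcon
    push_neg at hcon
    exact hXf ⟨FZ, fun x hx => by
      by_contra hnot
      exact hnot (hcon x hx)⟩
  have hx1 : ∃ x₁ ∈ Xᶜ, x₁ ∉ ⋃ g ∈ FZ, ((H : Set G) * {g} : Set G) := by
    by_contra hcon
    push_neg at hcon
    exact hXc ⟨FZ, fun x hx => by
      by_contra hnot
      exact hnot (hcon x hx)⟩
  obtain ⟨x₀, hx₀X, hx₀Z⟩ := hx0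
  obtain ⟨x₁, hx₁X, hx₁Z⟩ := hx1
  -- translating by h ∈ H preserves avoidance of the coset union
  have havoid : ∀ h ∈ H, ∀ z : G, z ∉ (⋃ g ∈ FZ, ((H : Set G) * {g} : Set G)) →
      h * z ∉ (⋃ g ∈ FZ, ((H : Set G) * {g} : Set G)) := by
    intro h hh z hz hmem
    obtain ⟨f, hf, hzf⟩ := Set.mem_iUnion₂.mp hmem
    have h1 : h * z * f⁻¹ ∈ H := mem_mulSingleton.mp hzf
    have h2 : z * f⁻¹ ∈ H := by
      have : h⁻¹ * (h * z * f⁻¹) ∈ H := H.mul_mem (H.inv_mem hh) h1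
      have he : h⁻¹ * (h * z * f⁻¹) = z * f⁻¹ := by group
      rwa [he] at this
    exact hz (Set.mem_iUnion₂.mpr ⟨f, hf, mem_mulSingleton.mpr h2⟩)
  have goal1 : K.relIndex H ≠ 0 := by
    apply relIndex_ne_zero_of_hfinite
    set g : G := x₁⁻¹ * x₀ with hg
    have hcover : (H : Set G) ⊆
        ((Y \ (Y * {g} : Set G)) ∪ ((Y * {g} : Set G) \ Y)) * {x₀⁻¹} := by
      intro h hh
      have hY0 : h * x₀ ∈ Y := by
        by_contra hnot
        have hin : h * x₀ ∈ Z := Or.inl ⟨hHX h hh x₀ hx₀X, hnot⟩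
        exact havoid h hh x₀ hx₀Z (hFZ hin)
      have hY1 : h * x₁ ∈ Yᶜ := by
        by_contra hnot
        simp only [Set.mem_compl_iff, not_not] at hnot
        have hin : h * x₁ ∈ Z := Or.inr ⟨hHXc h hh x₁ hx₁X, hnot⟩
        exact havoid h hh x₁ hx₁Z (hFZ hin)
      have hmem : h * x₀ ∈ Y \ (Y * {g} : Set G) := by
        refine ⟨hY0, ?_⟩
        intro hcon
        have : h * x₀ * g⁻¹ ∈ Y := mem_mulSingleton.mp hcon
        have he : h * x₀ * g⁻¹ = h * x₁ := by rw [hg]; group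
        rw [he] at this
        exact hY1 this
      refine mem_mulSingleton.mpr ?_
      have he : h * x₀⁻¹⁻¹ = h * x₀ := by group
      rw [he]
      exact Or.inl hmem
    exact HFinite.mono hcover ((hY.2 g).mulRight x₀⁻¹)
  -- Goal 2 : K is contained in finitely many right H-cosets.
  have hy0 : Y.Nonempty := by
    rcases Set.eq_empty_or_nonempty Y with h | h
    · exact absurd ⟨(∅ : Finset G), by simp [h]⟩ hYf
    · exact h
  have hy1 : Yᶜ.Nonempty := by
    rcases Set.eq_empty_or_nonempty Yᶜ with h | h
    · exact absurd ⟨(∅ : Finset G), by simp [h]⟩ hYc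
    · exact h
  obtain ⟨y₀, hy₀⟩ := hy0
  obtain ⟨y₁, hy₁⟩ := hy1
  have goal2 : H.relIndex K ≠ 0 := by
    apply relIndex_ne_zero_of_hfinite
    set g : G := y₁⁻¹ * y₀ with hg
    have hcover : (K : Set G) ⊆
        (Z * {y₀⁻¹}) ∪ (Z * {y₁⁻¹}) ∪
          (((X \ (X * {g} : Set G)) ∪ ((X * {g} : Set G) \ X)) * {y₀⁻¹}) := by
      intro k hk
      have hkY0 : k * y₀ ∈ Y := hKY k hk y₀ hy₀
      have hkY1 : k * y₁ ∈ Yᶜ := hKYc k hk y₁ hy₁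
      by_cases h0 : k * y₀ ∈ X
      · by_cases h1 : k * y₁ ∈ X
        · -- k * y₁ ∈ X ∩ Yᶜ ⊆ Z
          refine Or.inl (Or.inr (mem_mulSingleton.mpr ?_))
          have he : k * y₁⁻¹⁻¹ = k * y₁ := by group
          rw [he]
          exact Or.inl ⟨h1, hkY1⟩
        · -- k * y₀ ∈ X \ Xg
          refine Or.inr (mem_mulSingleton.mpr ?_)
          have he : k * y₀⁻¹⁻¹ = k * y₀ := by group
          rw [he]
          refine Or.inl ⟨h0, ?_⟩
          intro hcon
          have : k * y₀ * g⁻¹ ∈ X := mem_mulSingleton.mp hcon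
          have he2 : k * y₀ * g⁻¹ = k * y₁ := by rw [hg]; group
          rw [he2] at this
          exact h1 this
      · -- k * y₀ ∈ Xᶜ ∩ Y ⊆ Z
        refine Or.inl (Or.inl (mem_mulSingleton.mpr ?_))
        have he : k * y₀⁻¹⁻¹ = k * y₀ := by group
        rw [he]
        exact Or.inr ⟨h0, hkY0⟩
    have hfin : HFinite H ((Z * {y₀⁻¹}) ∪ (Z * {y₁⁻¹}) ∪
        (((X \ (X * {g} : Set G)) ∪ ((X * {g} : Set G) \ X)) * {y₀⁻¹})) :=
      ((hZfin'.mulRight y₀⁻¹).union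
        (hZfin'.mulRight y₁⁻¹)).union ((hX.2 g).mulRight y₀⁻¹)
    exact HFinite.mono hcover hfin
  refine ⟨?_, ?_⟩
  · rw [Subgroup.inf_relIndex_left]; exact goal1
  · rw [Subgroup.inf_relIndex_right]; exact goal2
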